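/- Residue lemma for pseudodifference operators: let V be a commutative associative unital algebra over a field F with an F-algebra automorphism S, and let a, b : ℤ → V have supports bounded above (the coefficient families of pseudodifference operators A(S) = ∑_n a_n Sⁿ and B(S) = ∑_n b_n Sⁿ in V((S^{−1}))). Then: (a) for every k ∈ ℤ, the λ^k-coefficient of Res_z(A(z)·B*(λ/z)) equals the λ^k-coefficient of Res_z(A(zλS)·B(z)), both being a_k·S^k(b_{−k}); (b) ∑_{n∈ℤ} a_{−n}·S^{−n}(b_n) − ∑_{n∈ℤ} b_{−n}·S^{−n}(a_n) ∈ (S − id)(V), where both sums are finite; that is, ∫ Res_z(A(zS)B(z)) = ∫ Res_z(B(zS)A(z)) in V/(S − id)(V). -/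

import Mathlib

private lemma aux_step (F : Type*) [Field F] (V : Type*) [CommRing V] [Algebra F V]
    (S : V ≃ₐ[F] V) (m : ℤ) (x : V) : S ((S ^ m) x) = (S ^ (m + 1)) x := by
  rw [add_comm, zpow_add, zpow_one]
  rfl

private lemma aux_sub (F : Type*) [Field F] (V : Type*) [CommRing V] [Algebra F V]
    (S : V ≃ₐ[F] V) (n : ℤ) (y : V) : ∃ w : V, S w - w = y - (S ^ n) y := by
  induction n using Int.induction_on with
  | zero => exact ⟨0, by simp⟩
  | succ n ih =>
    obtain ⟨w, hw⟩ := ih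
    refine ⟨w - (S ^ (n : ℤ)) y, ?_⟩
    rw [map_sub, aux_step]
    linear_combination hw
  | pred n ih =>
    obtain ⟨w, hw⟩ := ih
    refine ⟨w + (S ^ (-(n : ℤ) - 1)) y, ?_⟩
    rw [map_add, aux_step]
    have h2 : (-(n : ℤ) - 1 + 1) = -(n : ℤ) := by ring
    rw [h2]
    linear_combination hw

/-- residue lemma for pseudodifference operators.  Let `V` be a commutative
associative unital `F`-algebra with automorphism `S`, and `a, b : ℤ → V` coefficient
families with supports bounded above (pseudodifference operators `A(S) = ∑ aₙ Sⁿ`,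
`B(S) = ∑ bₙ Sⁿ` in `V((S⁻¹))`).  Then:
(a) for every `k ∈ ℤ`, the `λᵏ`-coefficients of `Res_z (A(z)·B*(λ/z))` and of
`Res_z (A(zλS)·B(z))` (written as convolution sums) both equal `a_k · Sᵏ(b_{−k})`;
(b) `∑_n a_{−n}·S^{−n}(b_n) − ∑_n b_{−n}·S^{−n}(a_n) ∈ (S − id)(V)`, i.e.
`∫ Res_z A(zS)B(z) = ∫ Res_z B(zS)A(z)`. -/
theorem stmt_15 (F : Type*) [Field F] (V : Type*) [CommRing V] [Algebra F V]
    (S : V ≃ₐ[F] V) (a b : ℤ → V)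
    (ha : ∃ N : ℤ, ∀ n : ℤ, N < n → a n = 0)
    (hb : ∃ N : ℤ, ∀ n : ℤ, N < n → b n = 0) :
    (∀ k : ℤ,
      (∑ᶠ p : ℤ × ℤ,
          if p.1 + p.2 = 0 ∧ -p.2 = k then a p.1 * (S ^ (-p.2)) (b p.2) else 0)
        = a k * (S ^ k) (b (-k))
      ∧ (∑ᶠ p : ℤ × ℤ,
          if p.1 + p.2 = 0 ∧ p.1 = k then a p.1 * (S ^ p.1) (b p.2) else 0)
        = a k * (S ^ k) (b (-k)))
    ∧ (∃ v : V, S v - v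
        = (∑ᶠ n : ℤ, a (-n) * (S ^ (-n)) (b n))
          - ∑ᶠ n : ℤ, b (-n) * (S ^ (-n)) (a n)) := by
  constructor
  · intro k
    constructor
    · rw [finsum_eq_single _ ((k, -k) : ℤ × ℤ)]
      · simp
      · rintro ⟨x, y⟩ hxy
        simp only [ne_eq, Prod.mk.injEq, not_and] at hxy
        by_cases h1 : x + y = 0
        · by_cases h2 : -y = k
          · exfalso
            have hy : y = -k := by omega
            have hx : x = k := by omega
            exact hxy hx hy
          · simp [h2]
        · simp [h1]
    · rw [finsum_eq_single _ ((k, -k) : ℤ × ℤ)]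
      · simp
      · rintro ⟨x, y⟩ hxy
        simp only [ne_eq, Prod.mk.injEq, not_and] at hxy
        by_cases h1 : x + y = 0
        · by_cases h2 : x = k
          · exfalso
            have hy : y = -k := by omega
            exact hxy h2 hy
          · simp [h2]
        · simp [h1]
  · obtain ⟨Na, hNa⟩ := ha
    obtain ⟨Nb, hNb⟩ := hb
    set t : ℤ → V := fun n => a (-n) * (S ^ (-n)) (b n) with ht
    have htfin : (Function.support t).Finite := by
      apply Set.Finite.subset (Set.finite_Icc (-Na) Nb)
      intro n hn
      simp only [Function.mem_support, ht] at hn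
      simp only [Set.mem_Icc]
      constructor
      · by_contra h
        exact hn (by rw [hNa (-n) (by omega)]; ring)
      · by_contra h
        exact hn (by rw [hNb n (by omega), map_zero]; ring)
    -- choose w
    have hw : ∀ n : ℤ, ∃ w : V, S w - w = t n - (S ^ n) (t n) := fun n =>
      aux_sub F V S n (t n)
    classical
    set w : ℤ → V := fun n => if t n = 0 then 0 else Classical.choose (hw n) with hwdef
    have hwprop : ∀ n : ℤ, S (w n) - w n = t n - (S ^ n) (t n) := by
      intro n
      by_cases h : t n = 0
      · simp [hwdef, h]
      · simp only [hwdef, h, if_false]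
        exact Classical.choose_spec (hw n)
    have hwfin : (Function.support w).Finite := by
      apply htfin.subset
      intro n hn
      simp only [Function.mem_support, hwdef] at hn ⊢
      by_contra h
      simp [h] at hn
    refine ⟨∑ᶠ n, w n, ?_⟩
    have hSmap : S (∑ᶠ n, w n) = ∑ᶠ n, S (w n) :=
      AddEquiv.map_finsum (S : V ≃+ V) w
    rw [hSmap]
    have hSwfin : (Function.support fun n => S (w n)).Finite := by
      apply hwfin.subset
      intro n hn
      simp only [Function.mem_support] at hn ⊢
      intro h
      simp [h] at hn
    rw [← finsum_sub_distrib hSwfin hwfin]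
    have h1 : ∑ᶠ n, (S (w n) - w n) = ∑ᶠ n, (t n - (S ^ n) (t n)) := by
      exact finsum_congr hwprop
    rw [h1]
    have hStfin : (Function.support fun n => (S ^ n) (t n)).Finite := by
      apply htfin.subset
      intro n hn
      simp only [Function.mem_support] at hn ⊢
      intro h
      simp [h] at hn
    rw [finsum_sub_distrib htfin hStfin]
    congr 1
    -- ∑ᶠ n, (S ^ n) (t n) = ∑ᶠ n, b (-n) * (S ^ (-n)) (a n)
    have key : ∀ n : ℤ, (S ^ n) (t n) = b n * (S ^ n) (a (-n)) := by
      intro n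
      simp only [ht]
      rw [map_mul]
      have : (S ^ n) ((S ^ (-n)) (b n)) = b n := by
        have := congrArg (fun g : V ≃ₐ[F] V => g (b n)) (zpow_add S n (-n))
        simp only [add_neg_cancel, zpow_zero] at this
        exact this.symm ▸ rfl
      rw [this]; ring
    rw [finsum_congr key]
    have := finsum_comp_equiv (Equiv.neg ℤ) (f := fun n : ℤ => b (-n) * (S ^ (-n)) (a n))
    rw [← this]
    apply finsum_congr
    intro n
    simp
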